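/- For a basic feasible solution with basis B, if for every nonbasic index j the reduced cost z_j − c_j = C_Bᵀ B⁻¹ a_j − c_j is ≤ 0, then the basic feasible solution X = (B⁻¹b, 0) is optimal for the linear program min Cᵀ X subject to AX = b, X ≥ 0. -/

import Mathlib

open Matrix

/-- If all reduced costs of nonbasic variables are ≤ 0, the basic feasible solution is optimal. -/
theorem nonpositive_reduced_costs_optimal (m n : ℕ)
    (B : Matrix (Fin m) (Fin m) ℝ) (N : Matrix (Fin m) (Fin n) ℝ)
    (b : Fin m → ℝ) (cB : Fin m → ℝ) (cN : Fin n → ℝ)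
    (hB : IsUnit B.det)
    (hfeas : 0 ≤ B⁻¹.mulVec b)
    (hred : ∀ j : Fin n, cB ⬝ᵥ B⁻¹.mulVec (fun i => N i j) - cN j ≤ 0) :
    ∀ X : Fin m ⊕ Fin n → ℝ,
      (Matrix.fromCols B N).mulVec X = b → 0 ≤ X →
      Sum.elim cB cN ⬝ᵥ Sum.elim (B⁻¹.mulVec b) (0 : Fin n → ℝ) ≤ Sum.elim cB cN ⬝ᵥ X := by
  intro X hX hXpos
  set xB : Fin m → ℝ := fun i => X (Sum.inl i) with hxBdef
  set xN : Fin n → ℝ := fun j => X (Sum.inr j) with hxNdef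
  have hX' : B.mulVec xB + N.mulVec xN = b := by
    rw [← hX]
    ext i
    simp [Matrix.fromCols, Matrix.mulVec, dotProduct, Fintype.sum_sum_type, xB, xN]
  have hxB : xB = B⁻¹.mulVec b - B⁻¹.mulVec (N.mulVec xN) := by
    have h2 := congrArg (fun v => B⁻¹.mulVec v) hX'
    simp only [Matrix.mulVec_add, Matrix.mulVec_mulVec,
      Matrix.nonsing_inv_mul _ hB, Matrix.one_mulVec] at h2
    rw [← h2, Matrix.mulVec_mulVec]
    abel
  have hLHS : Sum.elim cB cN ⬝ᵥ Sum.elim (B⁻¹.mulVec b) (0 : Fin n → ℝ)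
      = cB ⬝ᵥ B⁻¹.mulVec b := by
    simp [dotProduct, Fintype.sum_sum_type]
  have hRHS : Sum.elim cB cN ⬝ᵥ X = cB ⬝ᵥ xB + cN ⬝ᵥ xN := by
    simp [dotProduct, Fintype.sum_sum_type, xB, xN]
  rw [hLHS, hRHS, hxB, dotProduct_sub]
  have key : cB ⬝ᵥ B⁻¹.mulVec (N.mulVec xN)
      = ∑ j, (cB ⬝ᵥ B⁻¹.mulVec (fun i => N i j)) * xN j := by
    simp only [Matrix.dotProduct_mulVec]
    rfl
  have hsum : cB ⬝ᵥ B⁻¹.mulVec (N.mulVec xN) ≤ cN ⬝ᵥ xN := by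
    rw [key]
    have : cN ⬝ᵥ xN = ∑ j, cN j * xN j := rfl
    rw [this]
    apply Finset.sum_le_sum
    intro j _
    have h1 := hred j
    have h2 : 0 ≤ xN j := hXpos (Sum.inr j)
    nlinarith
  linarith
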